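/- Let K ∈ ℝ and let f : ℝⁿ → ℝ be K-convex and continuously differentiable. If ξ, ζ : [0,T) → ℝⁿ are differentiable curves with ξ'(t) = −∇f(ξ(t)) and ζ'(t) = −∇f(ζ(t)), then |ζ(t) − ξ(t)| ≤ e^{−Kt}·|ζ(0) − ξ(0)| for all t ∈ [0,T) (K-contraction property). -/

import Mathlib

open Filter Set Real
open scoped Topology RealInnerProductSpace

/-- `K`-contraction property of gradient flow of a `K`-convex `C¹`
function in Euclidean space. -/
theorem gradient_flow_K_contraction (n : ℕ) (K T : ℝ)
    (f : EuclideanSpace ℝ (Fin n) → ℝ)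
    (hKconv : ∀ x y : EuclideanSpace ℝ (Fin n), ∀ s : ℝ, s ∈ Set.Ioo (0:ℝ) 1 →
      f ((1 - s) • x + s • y) ≤ (1 - s) * f x + s * f y - K / 2 * (1 - s) * s * ‖y - x‖ ^ 2)
    (hC1 : ContDiff ℝ 1 f)
    (ξ ζ : ℝ → EuclideanSpace ℝ (Fin n))
    (hξ : ∀ t ∈ Set.Ico (0:ℝ) T, HasDerivAt ξ (-(gradient f (ξ t))) t)
    (hζ : ∀ t ∈ Set.Ico (0:ℝ) T, HasDerivAt ζ (-(gradient f (ζ t))) t) :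
    ∀ t ∈ Set.Ico (0:ℝ) T, ‖ζ t - ξ t‖ ≤ Real.exp (-K * t) * ‖ζ 0 - ξ 0‖ := by
  have hdiff : ∀ x, HasGradientAt f (gradient f x) x := fun x =>
    (hC1.differentiable one_ne_zero x).hasGradientAt
  -- Step 1: first order inequality from K-convexity
  have key : ∀ x y : EuclideanSpace ℝ (Fin n),
      ⟪gradient f x, y - x⟫ ≤ f y - f x - K / 2 * ‖y - x‖ ^ 2 := by
    intro x y
    set v := y - x with hv
    have hc : HasDerivAt (fun s : ℝ => x + s • v) v 0 := by
      simpa using ((hasDerivAt_id (0:ℝ)).smul_const v).const_add x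
    have hφ : HasDerivAt (fun s : ℝ => f (x + s • v)) ⟪gradient f x, v⟫ 0 := by
      have hF : HasFDerivAt f ((InnerProductSpace.toDual ℝ _) (gradient f x))
          ((fun s : ℝ => x + s • v) 0) := by
        simpa using (hdiff x).hasFDerivAt
      have h2 := hF.comp_hasDerivAt 0 hc
      simp only [InnerProductSpace.toDual_apply_apply] at h2
      exact h2
    have hslope : Tendsto (slope (fun s : ℝ => f (x + s • v)) 0) (𝓝[>] 0)
        (𝓝 ⟪gradient f x, v⟫) :=
      (hasDerivAt_iff_tendsto_slope.mp hφ).mono_left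
        (nhdsWithin_mono _ (fun s hs => ne_of_gt hs))
    have hRHS : Tendsto (fun s : ℝ => f y - f x - K / 2 * (1 - s) * ‖v‖ ^ 2) (𝓝[>] 0)
        (𝓝 (f y - f x - K / 2 * ‖v‖ ^ 2)) := by
      have : ContinuousAt (fun s : ℝ => f y - f x - K / 2 * (1 - s) * ‖v‖ ^ 2) 0 := by
        fun_prop
      simpa using this.tendsto.mono_left nhdsWithin_le_nhds
    refine le_of_tendsto_of_tendsto hslope hRHS ?_
    filter_upwards [Ioo_mem_nhdsGT_of_mem (left_mem_Ico.mpr one_pos)] with s hs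
    have h := hKconv x y s hs
    have hxy : (1 - s) • x + s • y = x + s • v := by
      rw [hv]; module
    rw [hxy] at h
    have hsub : f (x + s • v) - f (x + (0:ℝ) • v) ≤
        s * (f y - f x - K / 2 * (1 - s) * ‖v‖ ^ 2) := by
      simp only [zero_smul, add_zero]
      nlinarith [h]
    have : slope (fun s : ℝ => f (x + s • v)) 0 s =
        (f (x + s • v) - f (x + (0:ℝ) • v)) / s := by
      simp [slope_def_field]
    rw [this, div_le_iff₀ hs.1]
    linarith [hsub]
  -- Step 2: monotonicity of the gradient
  have mono : ∀ x y : EuclideanSpace ℝ (Fin n),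
      K * ‖y - x‖ ^ 2 ≤ ⟪gradient f y - gradient f x, y - x⟫ := by
    intro x y
    have h1 := key x y
    have h2 := key y x
    have e1 : ⟪gradient f y, x - y⟫ = -⟪gradient f y, y - x⟫ := by
      rw [← inner_neg_right]; congr 1; abel
    rw [e1, norm_sub_rev x y] at h2
    rw [inner_sub_left]
    linarith
  -- Step 3: Gronwall
  intro t ht
  set u : ℝ → EuclideanSpace ℝ (Fin n) := fun s => ζ s - ξ s with hu_def
  have hu : ∀ s ∈ Set.Ico (0:ℝ) T,
      HasDerivAt u (-(gradient f (ζ s)) - -(gradient f (ξ s))) s :=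
    fun s hs => (hζ s hs).sub (hξ s hs)
  have hg : ∀ s ∈ Set.Ico (0:ℝ) T,
      HasDerivAt (fun r => ⟪u r, u r⟫)
        (2 * ⟪-(gradient f (ζ s)) - -(gradient f (ξ s)), u s⟫) s := by
    intro s hs
    have := HasDerivAt.inner ℝ (hu s hs) (hu s hs)
    refine this.congr_deriv ?_
    rw [real_inner_comm (u s)]
    ring
  set h : ℝ → ℝ := fun r => Real.exp (2 * K * r) * ⟪u r, u r⟫ with hh_def
  have hh : ∀ s ∈ Set.Ico (0:ℝ) T,
      HasDerivAt h
        (2 * K * Real.exp (2 * K * s) * ⟪u s, u s⟫ +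
          Real.exp (2 * K * s) *
            (2 * ⟪-(gradient f (ζ s)) - -(gradient f (ξ s)), u s⟫)) s := by
    intro s hs
    have hexp : HasDerivAt (fun r : ℝ => Real.exp (2 * K * r))
        (Real.exp (2 * K * s) * (2 * K)) s := by
      simpa using (((hasDerivAt_id s).const_mul (2 * K)).exp)
    have := hexp.mul (hg s hs)
    refine this.congr_deriv ?_
    ring
  have hderiv_nonpos : ∀ s ∈ Set.Ico (0:ℝ) T,
      (2 * K * Real.exp (2 * K * s) * ⟪u s, u s⟫ +
        Real.exp (2 * K * s) *
          (2 * ⟪-(gradient f (ζ s)) - -(gradient f (ξ s)), u s⟫)) ≤ 0 := by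
    intro s hs
    have hmono := mono (ξ s) (ζ s)
    have e1 : ⟪-(gradient f (ζ s)) - -(gradient f (ξ s)), u s⟫ =
        -⟪gradient f (ζ s) - gradient f (ξ s), ζ s - ξ s⟫ := by
      rw [show -(gradient f (ζ s)) - -(gradient f (ξ s)) =
        -(gradient f (ζ s) - gradient f (ξ s)) by abel, inner_neg_left]
    rw [e1]
    have e2 : ⟪u s, u s⟫ = ‖ζ s - ξ s‖ ^ 2 := real_inner_self_eq_norm_sq _
    rw [e2]
    have hep := Real.exp_pos (2 * K * s)
    nlinarith [hmono, hep]
  -- h is antitone on [0, t]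
  have hsubset : Set.Icc (0:ℝ) t ⊆ Set.Ico (0:ℝ) T :=
    fun s hs => ⟨hs.1, lt_of_le_of_lt hs.2 ht.2⟩
  have anti : AntitoneOn h (Set.Icc 0 t) := by
    apply antitoneOn_of_deriv_nonpos (convex_Icc 0 t)
    · exact fun s hs => ((hh s (hsubset hs)).continuousAt).continuousWithinAt
    · intro s hs
      rw [interior_Icc] at hs
      exact ((hh s (hsubset ⟨le_of_lt hs.1, le_of_lt hs.2⟩)).differentiableAt).differentiableWithinAt
    · intro s hs
      rw [interior_Icc] at hs
      have hs' := hsubset ⟨le_of_lt hs.1, le_of_lt hs.2⟩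
      rw [(hh s hs').deriv]
      exact hderiv_nonpos s hs'
  have hht : h t ≤ h 0 := anti ⟨le_refl 0, ht.1⟩ ⟨ht.1, le_refl t⟩ ht.1
  have hh0 : h 0 = ‖ζ 0 - ξ 0‖ ^ 2 := by
    show Real.exp (2 * K * 0) * ⟪u 0, u 0⟫ = _
    rw [real_inner_self_eq_norm_sq, mul_zero, Real.exp_zero, one_mul]
  have hhte : h t = Real.exp (2 * K * t) * ‖ζ t - ξ t‖ ^ 2 := by
    show Real.exp (2 * K * t) * ⟪u t, u t⟫ = _
    rw [real_inner_self_eq_norm_sq]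
  rw [hh0, hhte] at hht
  have hsq : ‖ζ t - ξ t‖ ^ 2 ≤ (Real.exp (-K * t) * ‖ζ 0 - ξ 0‖) ^ 2 := by
    have he : Real.exp (2 * K * t) * (Real.exp (-K * t)) ^ 2 = 1 := by
      rw [sq, ← Real.exp_add, ← Real.exp_add,
        show 2 * K * t + (-K * t + -K * t) = 0 by ring, Real.exp_zero]
    have hep := Real.exp_pos (2 * K * t)
    nlinarith [hht, he, hep, sq_nonneg (Real.exp (-K * t) * ‖ζ 0 - ξ 0‖)]
  exact (pow_le_pow_iff_left₀ (norm_nonneg _) (by positivity) two_ne_zero).mp hsq
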